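/- Let μ be a directed distance on a nonempty finite set S and let R ⊆ Q_μ be a balanced section, with retraction φ_R : Q_μ → R sending each q ∈ Q_μ to the unique p ∈ R with q − p ∈ ℝe. Then (1) D_∞(φ_R(C)) ≤ D_∞(C) for every cycle C in Q_μ, and (2) a subset U ⊆ Q_μ is balanced if and only if D_∞(φ_R(C)) = D_∞(C) holds for every cycle C in U. -/

import Mathlib

open scoped BigOperators

/-- Points of `ℝ^{S^{cr}}`: pairs `p = (p^c, p^r)` of functions `S → ℝ`,
with the componentwise partial order (the product/pi order). -/
abbrev Pt (S : Type*) := (S → ℝ) × (S → ℝ)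

/-- `μ` is a directed distance: nonnegative with zero diagonal. -/
def DirDist {S : Type*} (μ : S → S → ℝ) : Prop :=
  (∀ s t, 0 ≤ μ s t) ∧ (∀ s, μ s s = 0)

/-- `d` is a directed metric: a directed distance satisfying the triangle inequality. -/
def DirMetric {V : Type*} (d : V → V → ℝ) : Prop :=
  DirDist d ∧ ∀ x y z, d x z ≤ d x y + d y z

/-- The polyhedron `Π_μ`. -/
def PiP {S : Type*} (μ : S → S → ℝ) : Set (Pt S) :=
  {p | ∀ s t, μ s t ≤ p.1 s + p.2 t}

/-- The polyhedron `P_μ = Π_μ ∩ ℝ_+^{S^{cr}}`. -/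
def PP {S : Type*} (μ : S → S → ℝ) : Set (Pt S) :=
  {p ∈ PiP μ | 0 ≤ p}

/-- The directed tight span `T_μ`: minimal elements of `P_μ`. -/
def TT {S : Type*} (μ : S → S → ℝ) : Set (Pt S) :=
  {p ∈ PP μ | ∀ q ∈ PP μ, q ≤ p → q = p}

/-- `Q_μ`: minimal elements of `Π_μ`. -/
def QQ {S : Type*} (μ : S → S → ℝ) : Set (Pt S) :=
  {p ∈ PiP μ | ∀ q ∈ PiP μ, q ≤ p → q = p}

/-- `Q_μ^+ = Q_μ ∩ ℝ_+^{S^{cr}}`. -/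
def QP {S : Type*} (μ : S → S → ℝ) : Set (Pt S) :=
  QQ μ ∩ {p | 0 ≤ p}

/-- `D_∞^+(f,g) = max_x (g(x) - f(x))_+`. -/
noncomputable def Dplus {X : Type*} [Fintype X] (f g : X → ℝ) : ℝ :=
  ⨆ x, max (g x - f x) 0

/-- `D_∞(p,q) = max ( D_∞^+(p^c,q^c), D_∞^+(q^r,p^r) )`. -/
noncomputable def Dinf {S : Type*} [Fintype S] (p q : Pt S) : ℝ :=
  max (Dplus p.1 q.1) (Dplus q.2 p.2)

/-- A subset `R` is balanced if no pair `p, q ∈ R` satisfies `p^c < q^c`,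
and no pair satisfies `p^r < q^r`. -/
def BalancedSet {S : Type*} (R : Set (Pt S)) : Prop :=
  (¬ ∃ p ∈ R, ∃ q ∈ R, ∀ s, p.1 s < q.1 s) ∧
  (¬ ∃ p ∈ R, ∃ q ∈ R, ∀ s, p.2 s < q.2 s)

/-- The vector `e = (1, -1)` spanning the linearity space of `Π_μ`. -/
def eVec (S : Type*) : Pt S := (fun _ => 1, fun _ => -1)

/-- `R ⊆ Q_μ` is a section: every point of `Q_μ` differs from exactly one point
of `R` by a multiple of `e`. -/
def IsSection {S : Type*} (μ : S → S → ℝ) (R : Set (Pt S)) : Prop :=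
  R ⊆ QQ μ ∧ ∀ q ∈ QQ μ, ∃! p, p ∈ R ∧ ∃ α : ℝ, q - p = α • eVec S

/-- The length of the cycle `(x 0, x 1, …, x m)` with respect to `d`. -/
def cycLen {V : Type*} (d : V → V → ℝ) (m : ℕ) (x : Fin (m + 1) → V) : ℝ :=
  ∑ i, d (x i) (x (i + 1))



section Aux

variable {S : Type*} [Fintype S] [Nonempty S]

/-- The key quantity `A(p,q) = max_s (q^c(s) - p^c(s))`. -/
noncomputable def Aval (p q : Pt S) : ℝ := ⨆ s, (q.1 s - p.1 s)

/-- `B(p,q) = max_s (p^r(s) - q^r(s))`. -/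
noncomputable def Bval (p q : Pt S) : ℝ := ⨆ s, (p.2 s - q.2 s)

lemma bddR (f : S → ℝ) : BddAbove (Set.range f) :=
  Set.Finite.bddAbove (Set.finite_range f)

lemma le_aval (p q : Pt S) (s : S) : q.1 s - p.1 s ≤ Aval p q :=
  le_ciSup (f := fun s => q.1 s - p.1 s) (bddR _) s

lemma le_bval (p q : Pt S) (s : S) : p.2 s - q.2 s ≤ Bval p q :=
  le_ciSup (f := fun s => p.2 s - q.2 s) (bddR _) s

lemma mySupCongr {f g : S → ℝ} (h : ∀ s, f s = g s) : (⨆ s, f s) = ⨆ s, g s := by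
  have : f = g := funext h
  rw [this]

lemma ciSup_add_const (f : S → ℝ) (c : ℝ) : (⨆ s, (f s + c)) = (⨆ s, f s) + c := by
  apply le_antisymm
  · exact ciSup_le fun s => by have := le_ciSup (bddR f) s; linarith
  · have h1 : ∀ s, f s ≤ (⨆ s, (f s + c)) - c := fun s => by
      have := le_ciSup (bddR (fun s => f s + c)) s
      linarith
    have h2 := ciSup_le h1
    linarith

lemma sup_neg_of_all_neg {f : S → ℝ} (h : ∀ s, f s < 0) : (⨆ s, f s) < 0 := by
  obtain ⟨s0, hs0⟩ := Finite.exists_max f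
  exact lt_of_le_of_lt (ciSup_le hs0) (h s0)

lemma dplus_eq (f g : S → ℝ) : Dplus f g = max (⨆ x, (g x - f x)) 0 := by
  unfold Dplus
  apply le_antisymm
  · exact ciSup_le fun x => max_le_max (le_ciSup (f := fun x => g x - f x) (bddR _) x) le_rfl
  · refine max_le (ciSup_mono (bddR _) fun x => le_max_left _ _) ?_
    have x0 : S := Classical.arbitrary S
    exact le_trans (le_max_right (g x0 - f x0) 0)
      (le_ciSup (bddR (fun x => max (g x - f x) 0)) x0)

lemma dinf_eq (p q : Pt S) : Dinf p q = max (max (Aval p q) (Bval p q)) 0 := by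
  unfold Dinf Aval Bval
  rw [dplus_eq, dplus_eq, max_max_max_comm, max_self]

/-- Tightness of minimal elements, first coordinate. -/
lemma tight_c {μ : S → S → ℝ} {p : Pt S} (hp : p ∈ QQ μ) (s : S) :
    ∃ t, p.1 s + p.2 t ≤ μ s t := by
  classical
  by_contra h
  push_neg at h
  obtain ⟨t0, ht0⟩ := Finite.exists_min (fun t => p.1 s + p.2 t - μ s t)
  set ε : ℝ := p.1 s + p.2 t0 - μ s t0 with hε
  have hεpos : 0 < ε := by have := h t0; simp only [hε]; linarith
  set q : Pt S := (Function.update p.1 s (p.1 s - ε), p.2) with hqdef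
  have hqPi : q ∈ PiP μ := by
    intro s' t
    by_cases hs : s' = s
    · subst hs
      simp only [hqdef, Function.update_self]
      have := ht0 t
      linarith
    · simp only [hqdef, Function.update_of_ne hs]
      exact hp.1 s' t
  have hqle : q ≤ p := by
    constructor
    · intro s'
      by_cases hs : s' = s
      · subst hs
        simp only [hqdef, Function.update_self]
        linarith
      · simp only [hqdef, Function.update_of_ne hs]
        exact le_rfl
    · exact le_rfl
  have := hp.2 q hqPi hqle
  have h1 : q.1 s = p.1 s := by rw [this]
  simp only [hqdef, Function.update_self] at h1
  linarith

/-- Tightness of minimal elements, second coordinate. -/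
lemma tight_r {μ : S → S → ℝ} {p : Pt S} (hp : p ∈ QQ μ) (t : S) :
    ∃ s, p.1 s + p.2 t ≤ μ s t := by
  classical
  by_contra h
  push_neg at h
  obtain ⟨s0, hs0⟩ := Finite.exists_min (fun s => p.1 s + p.2 t - μ s t)
  set ε : ℝ := p.1 s0 + p.2 t - μ s0 t with hε
  have hεpos : 0 < ε := by have := h s0; simp only [hε]; linarith
  set q : Pt S := (p.1, Function.update p.2 t (p.2 t - ε)) with hqdef
  have hqPi : q ∈ PiP μ := by
    intro s t'
    by_cases ht : t' = t
    · subst ht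
      simp only [hqdef, Function.update_self]
      have := hs0 s
      linarith
    · simp only [hqdef, Function.update_of_ne ht]
      exact hp.1 s t'
  have hqle : q ≤ p := by
    constructor
    · exact le_rfl
    · intro t'
      by_cases ht : t' = t
      · subst ht
        simp only [hqdef, Function.update_self]
        linarith
      · simp only [hqdef, Function.update_of_ne ht]
        exact le_rfl
  have := hp.2 q hqPi hqle
  have h1 : q.2 t = p.2 t := by rw [this]
  simp only [hqdef, Function.update_self] at h1
  linarith

lemma aval_eq_bval {μ : S → S → ℝ} {p q : Pt S} (hp : p ∈ QQ μ) (hq : q ∈ QQ μ) :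
    Aval p q = Bval p q := by
  apply le_antisymm
  · apply ciSup_le
    intro s
    obtain ⟨t, ht⟩ := tight_c hq s
    have hft : μ s t ≤ p.1 s + p.2 t := hp.1 s t
    have : q.1 s - p.1 s ≤ p.2 t - q.2 t := by linarith
    exact this.trans (le_bval p q t)
  · apply ciSup_le
    intro t
    obtain ⟨s, hs⟩ := tight_r hp t
    have hft : μ s t ≤ q.1 s + q.2 t := hq.1 s t
    have : p.2 t - q.2 t ≤ q.1 s - p.1 s := by linarith
    exact this.trans (le_aval p q s)

lemma dinfQ {μ : S → S → ℝ} {p q : Pt S} (hp : p ∈ QQ μ) (hq : q ∈ QQ μ) :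
    Dinf p q = max (Aval p q) 0 := by
  rw [dinf_eq, aval_eq_bval hp hq, max_self]

lemma phi_c {p r : Pt S} {α : ℝ} (h : p - r = α • eVec S) (s : S) :
    r.1 s = p.1 s - α := by
  have h1 := congrFun (congrArg Prod.fst h) s
  simp only [Prod.fst_sub, Pi.sub_apply, Prod.smul_fst, eVec, Pi.smul_apply,
    smul_eq_mul, mul_one] at h1
  linarith

lemma aval_shift {p q rp rq : Pt S} {αp αq : ℝ}
    (h1 : p - rp = αp • eVec S) (h2 : q - rq = αq • eVec S) :
    Aval rp rq = Aval p q + (αp - αq) := by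
  unfold Aval
  rw [show (⨆ s, (rq.1 s - rp.1 s)) = ⨆ s, ((q.1 s - p.1 s) + (αp - αq)) from
    mySupCongr (fun s => by rw [phi_c h1 s, phi_c h2 s]; ring)]
  exact ciSup_add_const _ _

lemma balanced_nonneg {R : Set (Pt S)} (hRb : BalancedSet R) {p q : Pt S}
    (hp : p ∈ R) (hq : q ∈ R) : 0 ≤ Aval p q := by
  by_contra h
  push_neg at h
  refine hRb.1 ⟨q, hq, p, hp, fun s => ?_⟩
  have := le_aval p q s
  linarith

end Aux

section Main

variable {S : Type*} [Fintype S] [Nonempty S]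

lemma cycLen_eq {μ : S → S → ℝ} (m : ℕ) (x : Fin (m + 1) → Pt S)
    (hx : ∀ i, x i ∈ QQ μ) :
    cycLen Dinf m x = ∑ i, max (Aval (x i) (x (i + 1))) 0 := by
  unfold cycLen
  exact Finset.sum_congr rfl fun i _ => dinfQ (hx i) (hx (i + 1))

lemma tele (m : ℕ) (α : Fin (m + 1) → ℝ) :
    ∑ i : Fin (m + 1), (α i - α (i + 1)) = 0 := by
  have h1 : ∑ i : Fin (m + 1), α (i + 1) = ∑ i, α i :=
    Fintype.sum_equiv (Equiv.addRight (1 : Fin (m + 1))) (fun i => α (i + 1)) α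
      (fun i => rfl)
  rw [Finset.sum_sub_distrib, h1, sub_self]

lemma phi_cycLen {μ : S → S → ℝ} {R : Set (Pt S)} (hR : IsSection μ R)
    (hRb : BalancedSet R) {φ : Pt S → Pt S}
    (hφ : ∀ q ∈ QQ μ, φ q ∈ R ∧ ∃ α : ℝ, q - φ q = α • eVec S)
    (m : ℕ) (x : Fin (m + 1) → Pt S) (hx : ∀ i, x i ∈ QQ μ) :
    cycLen Dinf m (fun i => φ (x i)) = ∑ i, Aval (x i) (x (i + 1)) := by
  choose α hα using fun i => (hφ (x i) (hx i)).2
  have hmem : ∀ i, φ (x i) ∈ R := fun i => (hφ (x i) (hx i)).1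
  have hedge : ∀ i : Fin (m + 1),
      Dinf (φ (x i)) (φ (x (i + 1))) = Aval (x i) (x (i + 1)) + (α i - α (i + 1)) := by
    intro i
    have hQ1 : φ (x i) ∈ QQ μ := hR.1 (hmem i)
    have hQ2 : φ (x (i + 1)) ∈ QQ μ := hR.1 (hmem (i + 1))
    rw [dinfQ hQ1 hQ2, aval_shift (hα i) (hα (i + 1))]
    have h0 : 0 ≤ Aval (φ (x i)) (φ (x (i + 1))) :=
      balanced_nonneg hRb (hmem i) (hmem (i + 1))
    rw [aval_shift (hα i) (hα (i + 1))] at h0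
    exact max_eq_left h0
  unfold cycLen
  calc (∑ i, Dinf (φ (x i)) (φ (x (i + 1))))
      = ∑ i, (Aval (x i) (x (i + 1)) + (α i - α (i + 1))) :=
        Finset.sum_congr rfl fun i _ => hedge i
    _ = ∑ i, Aval (x i) (x (i + 1)) := by
        rw [Finset.sum_add_distrib, tele m α, add_zero]

end Main

/-- Lemma 2.7.  Let `R ⊆ Q_μ` be a balanced section and `φ_R : Q_μ → R` the
retraction along `ℝe`.  Then (1) `φ_R` is cyclically nonexpansive, and
(2) `U ⊆ Q_μ` is balanced iff `φ_R` preserves the length of every cycle in `U`. -/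
theorem stmt5 {S : Type*} [Fintype S] [Nonempty S] (μ : S → S → ℝ)
    (hμ : DirDist μ) (R : Set (Pt S)) (hR : IsSection μ R) (hRb : BalancedSet R)
    (φ : Pt S → Pt S)
    (hφ : ∀ q ∈ QQ μ, φ q ∈ R ∧ ∃ α : ℝ, q - φ q = α • eVec S) :
    (∀ (m : ℕ) (x : Fin (m + 1) → Pt S), (∀ i, x i ∈ QQ μ) →
      cycLen Dinf m (fun i => φ (x i)) ≤ cycLen Dinf m x) ∧
    (∀ U ⊆ QQ μ, (BalancedSet U ↔
      ∀ (m : ℕ) (x : Fin (m + 1) → Pt S), (∀ i, x i ∈ U) →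
        cycLen Dinf m (fun i => φ (x i)) = cycLen Dinf m x)) := by
  have part1 : ∀ (m : ℕ) (x : Fin (m + 1) → Pt S), (∀ i, x i ∈ QQ μ) →
      cycLen Dinf m (fun i => φ (x i)) ≤ cycLen Dinf m x := by
    intro m x hx
    rw [phi_cycLen hR hRb hφ m x hx, cycLen_eq m x hx]
    exact Finset.sum_le_sum fun i _ => le_max_left _ _
  refine ⟨part1, ?_⟩
  intro U hU
  constructor
  · -- balanced ⇒ length preserved
    intro hUb m x hxU
    have hx : ∀ i, x i ∈ QQ μ := fun i => hU (hxU i)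
    rw [phi_cycLen hR hRb hφ m x hx, cycLen_eq m x hx]
    refine Finset.sum_congr rfl fun i _ => ?_
    exact (max_eq_left (balanced_nonneg hUb (hxU i) (hxU (i + 1)))).symm
  · -- length preserved ⇒ balanced
    intro h
    by_contra hUb
    -- extract a pair u, v ∈ U with Aval u v < 0
    have hpair : ∃ u ∈ U, ∃ v ∈ U, Aval u v < 0 := by
      rcases not_and_or.mp hUb with h1 | h1
      · rw [not_not] at h1
        obtain ⟨p, hpU, q, hqU, hlt⟩ := h1
        exact ⟨q, hqU, p, hpU, sup_neg_of_all_neg fun s => by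
          have := hlt s; simpa using sub_neg.mpr this⟩
      · rw [not_not] at h1
        obtain ⟨p, hpU, q, hqU, hlt⟩ := h1
        have hB : Bval p q < 0 := sup_neg_of_all_neg fun s => sub_neg.mpr (hlt s)
        rw [← aval_eq_bval (hU hpU) (hU hqU)] at hB
        exact ⟨p, hpU, q, hqU, hB⟩
    obtain ⟨u, huU, v, hvU, hAneg⟩ := hpair
    -- the 2-cycle (v, u)
    set x : Fin 2 → Pt S := ![v, u] with hxdef
    have hxU : ∀ i, x i ∈ U := by
      intro i
      fin_cases i
      · exact hvU
      · exact huU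
    have hx : ∀ i, x i ∈ QQ μ := fun i => hU (hxU i)
    have heq := h 1 x hxU
    rw [phi_cycLen hR hRb hφ 1 x hx, cycLen_eq 1 x hx] at heq
    have h01 : (0 : Fin 2) + 1 = 1 := by decide
    have h10 : (1 : Fin 2) + 1 = 0 := by decide
    rw [Fin.sum_univ_two, Fin.sum_univ_two, h01, h10] at heq
    have hx0 : x 0 = v := rfl
    have hx1 : x 1 = u := rfl
    rw [hx0, hx1] at heq
    -- heq : Aval v u + Aval u v = max (Aval v u) 0 + max (Aval u v) 0
    have e1 : max (Aval u v) 0 = 0 := max_eq_right hAneg.le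
    have e2 : Aval v u ≤ max (Aval v u) 0 := le_max_left _ _
    rw [e1] at heq
    linarith
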